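/- arXiv:1607.02188 — 4 statements merged into one kernel-verified Lean document; each statement's English description precedes it below -/
import Mathlib

section
/- The continuous ranked probability score satisfies the kernel identity: for a cumulative distribution function F with finite first moment and any x ∈ ℝ, -∫_{-∞}^{∞} (F(y) − 1{y ≥ x})² dy = (1/2) E[|Y − Y'|] − E[|Y − x|], where Y, Y' are independent random variables with distribution F. -/
open MeasureTheory ProbabilityTheory

noncomputable def stepFn (a y : ℝ) : ℝ := if a ≤ y then (1:ℝ) else 0

lemma stepFn_sq_eq_indicator (a b : ℝ) :
    (fun y => (stepFn a y - stepFn b y)^2) =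
      Set.indicator (Set.Ico (min a b) (max a b)) (fun _ => (1:ℝ)) := by
  funext y
  simp only [stepFn, Set.indicator, Set.mem_Ico, min_le_iff, lt_max_iff]
  by_cases h1 : a ≤ y <;> by_cases h2 : b ≤ y
  · simp [h1, h2, not_lt.mpr h1, not_lt.mpr h2]
  · simp [h1, h2, lt_of_not_ge h2, not_lt.mpr h1]
  · simp [h1, h2, lt_of_not_ge h1, not_lt.mpr h2]
  · simp [h1, h2, lt_of_not_ge h1, lt_of_not_ge h2]

lemma integrable_stepFn_sq (a b : ℝ) :
    Integrable (fun y => (stepFn a y - stepFn b y)^2) volume := by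
  rw [stepFn_sq_eq_indicator]
  rw [integrable_indicator_iff measurableSet_Ico]
  exact integrableOn_const (by rw [Real.volume_Ico]; exact ENNReal.ofReal_ne_top)

lemma integral_stepFn_sq (a b : ℝ) :
    ∫ y, (stepFn a y - stepFn b y)^2 = |a - b| := by
  rw [stepFn_sq_eq_indicator, integral_indicator measurableSet_Ico]
  rw [setIntegral_const, measureReal_def, Real.volume_Ico, smul_eq_mul, mul_one,
    ENNReal.toReal_ofReal (by simp [min_le_max] : (0:ℝ) ≤ max a b - min a b)]
  rw [abs_sub_comm]
  exact max_sub_min_eq_abs a b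

lemma stepFn_mul_eq (a b x : ℝ) (y : ℝ) :
    (stepFn a y - stepFn x y) * (stepFn b y - stepFn x y) =
      ((stepFn a y - stepFn x y)^2 + (stepFn b y - stepFn x y)^2
        - (stepFn a y - stepFn b y)^2) / 2 := by
  ring

lemma integral_stepFn_mul (a b x : ℝ) :
    ∫ y, (stepFn a y - stepFn x y) * (stepFn b y - stepFn x y) =
      (|a - x| + |b - x| - |a - b|) / 2 := by
  have h : (fun y => (stepFn a y - stepFn x y) * (stepFn b y - stepFn x y)) =
      fun y => ((stepFn a y - stepFn x y)^2 + (stepFn b y - stepFn x y)^2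
        - (stepFn a y - stepFn b y)^2) / 2 := by
    funext y; exact stepFn_mul_eq a b x y
  rw [h]
  have h1 : Integrable (fun y => (stepFn a y - stepFn x y)^2 + (stepFn b y - stepFn x y)^2)
      volume := (integrable_stepFn_sq a x).add (integrable_stepFn_sq b x)
  rw [integral_div, integral_sub h1 (integrable_stepFn_sq a b),
    integral_add (integrable_stepFn_sq a x) (integrable_stepFn_sq b x),
    integral_stepFn_sq, integral_stepFn_sq, integral_stepFn_sq]

lemma measurable_stepFn_prod (x : ℝ) :
    Measurable (fun q : (ℝ × ℝ) × ℝ => (stepFn q.1.1 q.2 - stepFn x q.2)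
      * (stepFn q.1.2 q.2 - stepFn x q.2)) := by
  unfold stepFn
  apply Measurable.mul <;> apply Measurable.sub <;>
    refine Measurable.ite ?_ measurable_const measurable_const
  · exact measurableSet_le (measurable_fst.fst) measurable_snd
  · exact measurableSet_le measurable_const measurable_snd
  · exact measurableSet_le (measurable_fst.snd) measurable_snd
  · exact measurableSet_le measurable_const measurable_snd

/-- CRPS kernel identity: for a distribution `μ` on ℝ with finite first moment,
cdf `F` and any `x ∈ ℝ`,
`-∫ (F(y) - 1{y ≥ x})² dy = (1/2) E[|Y - Y'|] - E[|Y - x|]`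
where `Y, Y'` are i.i.d. with distribution `μ`. -/
theorem crps_kernel_identity (μ : Measure ℝ) [IsProbabilityMeasure μ]
    (hint : Integrable (fun y => |y|) μ) (x : ℝ) :
    -∫ y, (cdf μ y - (if x ≤ y then (1:ℝ) else 0))^2 =
      (1/2) * (∫ p, |p.1 - p.2| ∂(μ.prod μ)) - ∫ y, |y - x| ∂μ := by
  -- integrability facts
  have habs : ∀ c : ℝ, Integrable (fun z => |z - c|) μ := by
    intro c
    refine (hint.add (integrable_const |c|)).mono
      ((measurable_id.sub measurable_const).abs.aestronglyMeasurable) ?_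
    filter_upwards with z
    simp only [Real.norm_eq_abs, abs_abs]
    calc |z - c| ≤ |z| + |c| := abs_sub z c
    _ ≤ |(|z| + |c|)| := le_abs_self _
  have hI1 : Integrable (fun p : ℝ × ℝ => |p.1 - x|) (μ.prod μ) := by
    have := (habs x).mul_prod (integrable_const (1:ℝ)) (ν := μ)
    simpa using this
  have hI2 : Integrable (fun p : ℝ × ℝ => |p.2 - x|) (μ.prod μ) := by
    have := (integrable_const (1:ℝ)).mul_prod (habs x) (μ := μ)
    simpa using this
  have hI3 : Integrable (fun p : ℝ × ℝ => |p.1 - p.2|) (μ.prod μ) := by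
    have hb : Integrable (fun p : ℝ × ℝ => |p.1| + |p.2|) (μ.prod μ) := by
      have h1 := hint.mul_prod (integrable_const (1:ℝ)) (ν := μ)
      have h2 := (integrable_const (1:ℝ)).mul_prod hint (μ := μ)
      simpa [Pi.add_def] using h1.add h2
    refine hb.mono ((measurable_fst.sub measurable_snd).abs.aestronglyMeasurable) ?_
    filter_upwards with p
    simp only [Real.norm_eq_abs, abs_abs]
    calc |p.1 - p.2| ≤ |p.1| + |p.2| := abs_sub p.1 p.2
    _ ≤ |(|p.1| + |p.2|)| := le_abs_self _
  -- the kernel function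
  set φ : ℝ × ℝ → ℝ → ℝ := fun p y => (stepFn p.1 y - stepFn x y) * (stepFn p.2 y - stepFn x y)
    with hφ
  -- pointwise: (cdf μ y - 1{x≤y})² = ∫ φ p y d(μ×μ)
  have hpt : ∀ y : ℝ, (cdf μ y - (if x ≤ y then (1:ℝ) else 0))^2 =
      ∫ p, φ p y ∂(μ.prod μ) := by
    intro y
    have hcdf : cdf μ y = ∫ z, stepFn z y ∂μ := by
      have : (fun z => stepFn z y) = Set.indicator (Set.Iic y) (fun _ => (1:ℝ)) := by
        funext z
        simp only [stepFn, Set.indicator, Set.mem_Iic]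
      rw [this, integral_indicator_const _ measurableSet_Iic]
      simp [cdf_eq_real]
    have hsub : cdf μ y - (if x ≤ y then (1:ℝ) else 0) =
        ∫ z, (stepFn z y - stepFn x y) ∂μ := by
      rw [integral_sub]
      · rw [← hcdf, integral_const]
        simp [stepFn]
      · refine (integrable_const (1:ℝ)).mono ?_ ?_
        · apply Measurable.aestronglyMeasurable
          unfold stepFn
          exact Measurable.ite (measurableSet_le measurable_id measurable_const)
            measurable_const measurable_const
        · filter_upwards with z
          simp only [stepFn, Real.norm_eq_abs]
          split <;> norm_num
      · exact integrable_const _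
    rw [hsub, sq]
    exact (integral_prod_mul (fun z => stepFn z y - stepFn x y)
      (fun z => stepFn z y - stepFn x y)).symm
  -- integrability of uncurry φ on (μ×μ) ⊗ volume
  have hmeas : Measurable (Function.uncurry φ) := measurable_stepFn_prod x
  have hφint : Integrable (Function.uncurry φ) ((μ.prod μ).prod volume) := by
    rw [integrable_prod_iff hmeas.aestronglyMeasurable]
    constructor
    · filter_upwards with p
      have : Integrable (fun y => (stepFn p.1 y - stepFn x y)^2
          + (stepFn p.2 y - stepFn x y)^2) volume :=
        (integrable_stepFn_sq p.1 x).add (integrable_stepFn_sq p.2 x)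
      refine this.mono ?_ ?_
      · exact ((measurable_stepFn_prod x).comp (measurable_const.prodMk measurable_id)).aestronglyMeasurable
      · filter_upwards with y
        simp only [Function.uncurry, hφ, Real.norm_eq_abs]
        rw [abs_mul]
        have h1 : ∀ a : ℝ, |stepFn a y - stepFn x y| ≤ 1 := by
          intro a; simp only [stepFn]; split <;> split <;> norm_num
        have h2 : ∀ a : ℝ, |stepFn a y - stepFn x y| = (stepFn a y - stepFn x y)^2 := by
          intro a; simp only [stepFn]; split <;> split <;> norm_num
        calc |stepFn p.1 y - stepFn x y| * |stepFn p.2 y - stepFn x y|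
            ≤ |stepFn p.1 y - stepFn x y| * 1 :=
              mul_le_mul_of_nonneg_left (h1 p.2) (abs_nonneg _)
        _ = (stepFn p.1 y - stepFn x y)^2 := by rw [mul_one, h2 p.1]
        _ ≤ (stepFn p.1 y - stepFn x y)^2 + (stepFn p.2 y - stepFn x y)^2 := le_add_of_nonneg_right (sq_nonneg _)
        _ ≤ |(stepFn p.1 y - stepFn x y)^2 + (stepFn p.2 y - stepFn x y)^2| := le_abs_self _
    · have heq : (fun p : ℝ × ℝ => ∫ y, ‖Function.uncurry φ (p, y)‖) =
          fun p => ∫ y, |stepFn p.1 y - stepFn x y| * |stepFn p.2 y - stepFn x y| := by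
        funext p
        congr 1
        funext y
        simp [Function.uncurry, hφ, Real.norm_eq_abs, abs_mul]
      rw [heq]
      refine (hI1.add hI2).mono ?_ ?_
      · apply AEStronglyMeasurable.integral_prod_right'
          (f := fun q : (ℝ × ℝ) × ℝ => |stepFn q.1.1 q.2 - stepFn x q.2|
            * |stepFn q.1.2 q.2 - stepFn x q.2|)
        exact ((measurable_stepFn_prod x).abs).aestronglyMeasurable.congr (by
          filter_upwards with q
          simp [abs_mul])
      · filter_upwards with p
        simp only [Real.norm_eq_abs]
        have hb : ∫ y, |stepFn p.1 y - stepFn x y| * |stepFn p.2 y - stepFn x y| ≤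
            |p.1 - x| + |p.2 - x| := by
          have h2 : ∀ a y : ℝ, |stepFn a y - stepFn x y| = (stepFn a y - stepFn x y)^2 := by
            intro a y; simp only [stepFn]; split <;> split <;> norm_num
          have h1 : ∀ a y : ℝ, |stepFn a y - stepFn x y| ≤ 1 := by
            intro a y; simp only [stepFn]; split <;> split <;> norm_num
          have hle : ∀ y, |stepFn p.1 y - stepFn x y| * |stepFn p.2 y - stepFn x y| ≤
              (stepFn p.1 y - stepFn x y)^2 + (stepFn p.2 y - stepFn x y)^2 := by
            intro y
            calc |stepFn p.1 y - stepFn x y| * |stepFn p.2 y - stepFn x y|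
                ≤ |stepFn p.1 y - stepFn x y| * 1 :=
                  mul_le_mul_of_nonneg_left (h1 p.2 y) (abs_nonneg _)
            _ = (stepFn p.1 y - stepFn x y)^2 := by rw [mul_one, h2 p.1 y]
            _ ≤ (stepFn p.1 y - stepFn x y)^2 + (stepFn p.2 y - stepFn x y)^2 :=
                  le_add_of_nonneg_right (sq_nonneg _)
          calc ∫ y, |stepFn p.1 y - stepFn x y| * |stepFn p.2 y - stepFn x y|
              ≤ ∫ y, ((stepFn p.1 y - stepFn x y)^2 + (stepFn p.2 y - stepFn x y)^2) := by
                apply integral_mono_of_nonneg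
                · filter_upwards with y
                  positivity
                · exact (integrable_stepFn_sq p.1 x).add (integrable_stepFn_sq p.2 x)
                · filter_upwards with y using hle y
          _ = |p.1 - x| + |p.2 - x| := by
                rw [integral_add (integrable_stepFn_sq p.1 x) (integrable_stepFn_sq p.2 x),
                  integral_stepFn_sq, integral_stepFn_sq]
        have h0 : 0 ≤ ∫ y, |stepFn p.1 y - stepFn x y| * |stepFn p.2 y - stepFn x y| := by
          apply integral_nonneg; intro y; positivity
        rw [abs_of_nonneg h0]
        calc ∫ y, |stepFn p.1 y - stepFn x y| * |stepFn p.2 y - stepFn x y|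
            ≤ |p.1 - x| + |p.2 - x| := hb
        _ ≤ |(|p.1 - x| + |p.2 - x|)| := le_abs_self _
  -- Fubini
  have hswap : ∫ y, ∫ p, φ p y ∂(μ.prod μ) = ∫ p, (∫ y, φ p y) ∂(μ.prod μ) :=
    (integral_integral_swap hφint).symm
  have hinner : ∀ p : ℝ × ℝ, ∫ y, φ p y = (|p.1 - x| + |p.2 - x| - |p.1 - p.2|) / 2 :=
    fun p => integral_stepFn_mul p.1 p.2 x
  have hmain : ∫ y, (cdf μ y - (if x ≤ y then (1:ℝ) else 0))^2 =
      ∫ p, (|p.1 - x| + |p.2 - x| - |p.1 - p.2|) / 2 ∂(μ.prod μ) := by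
    calc ∫ y, (cdf μ y - (if x ≤ y then (1:ℝ) else 0))^2
        = ∫ y, ∫ p, φ p y ∂(μ.prod μ) := by
          congr 1; funext y; exact hpt y
    _ = ∫ p, (∫ y, φ p y) ∂(μ.prod μ) := hswap
    _ = ∫ p, (|p.1 - x| + |p.2 - x| - |p.1 - p.2|) / 2 ∂(μ.prod μ) := by
          congr 1; funext p; exact hinner p
  rw [hmain]
  have hadd : Integrable (fun p : ℝ × ℝ => |p.1 - x| + |p.2 - x|) (μ.prod μ) := hI1.add hI2
  rw [integral_div, integral_sub hadd hI3, integral_add hI1 hI2]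
  have e1 : ∫ p : ℝ × ℝ, |p.1 - x| ∂(μ.prod μ) = ∫ z, |z - x| ∂μ := by
    rw [integral_fun_fst (f := fun z => |z - x|)]
    simp
  have e2 : ∫ p : ℝ × ℝ, |p.2 - x| ∂(μ.prod μ) = ∫ z, |z - x| ∂μ := by
    rw [integral_fun_snd (f := fun z => |z - x|)]
    simp
  rw [e1, e2]
  ring
end

section
/- A normal variance-mean mixture with GIG mixing has density obtained by Bessel integration: if X | V ~ N(λ + β V, V Σ) in ℝ^d with Σ positive definite and V ~ GIG(ν, a, b), then the density of X at x equals (|Σ|^{-1/2} / (2π)^{d/2}) (a/b)^{ν/2} exp((x − λ)^T Σ^{-1} β) · (b̂/â)^{ν̂/2} K_{ν̂}(√(âb̂)) / K_ν(√(ab)), where ν̂ = ν − d/2, â = β^T Σ^{-1} β + a, b̂ = (x − λ)^T Σ^{-1} (x − λ) + b. -/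
open MeasureTheory Real Matrix

/-- Modified Bessel function of the second kind. -/
noncomputable def besselK (ν z : ℝ) : ℝ :=
  (1/2) * (z/2) ^ ν * ∫ t in Set.Ioi (0:ℝ), t ^ (-ν - 1) * Real.exp (-t - z^2 / (4*t))

/-- Density of the GIG(ν, a, b) distribution. -/
noncomputable def gigPdf (ν a b v : ℝ) : ℝ :=
  if 0 < v then
    (a/b) ^ (ν/2) * v ^ (ν-1) / (2 * besselK ν (Real.sqrt (a*b))) *
      Real.exp (-(a*v)/2 - b/(2*v))
  else 0

/-- Multivariate Gaussian density with mean `m` and covariance matrix `S`. -/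
noncomputable def mvnPdf {d : ℕ} (m : Fin d → ℝ) (S : Matrix (Fin d) (Fin d) ℝ)
    (x : Fin d → ℝ) : ℝ :=
  (2*Real.pi) ^ (-(d:ℝ)/2) * S.det ^ (-(1:ℝ)/2) *
    Real.exp (-(1/2) * ((x - m) ⬝ᵥ (S⁻¹ *ᵥ (x - m))))

lemma bessel_integral (μ A B : ℝ) (hA : 0 < A) (hB : 0 < B) :
    ∫ v in Set.Ioi (0:ℝ), v ^ (μ-1) * Real.exp (-(A*v)/2 - B/(2*v)) =
      2 * (B/A) ^ (μ/2) * besselK μ (Real.sqrt (A*B)) := by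
  have himg : (fun t : ℝ => B/(2*t)) '' Set.Ioi 0 = Set.Ioi 0 := by
    ext y
    simp only [Set.mem_image, Set.mem_Ioi]
    constructor
    · rintro ⟨t, ht, rfl⟩
      exact div_pos hB (by positivity)
    · intro hy
      refine ⟨B/(2*y), div_pos hB (by positivity), ?_⟩
      field_simp
  have hinj : Set.InjOn (fun t : ℝ => B/(2*t)) (Set.Ioi 0) := by
    intro s hs t ht h
    simp only [Set.mem_Ioi] at hs ht
    have h2 := (div_eq_div_iff (by positivity : (2*s:ℝ) ≠ 0)
      (by positivity : (2*t:ℝ) ≠ 0)).mp h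
    have h3 := mul_left_cancel₀ hB.ne' (by linarith : B*(2*t) = B*(2*s))
    linarith
  have hderiv : ∀ t ∈ Set.Ioi (0:ℝ),
      HasDerivWithinAt (fun t : ℝ => B/(2*t)) (-(B/(2*t^2))) (Set.Ioi 0) t := by
    intro t ht
    simp only [Set.mem_Ioi] at ht
    have h1 : HasDerivAt (fun t : ℝ => B/2 * t⁻¹) (B/2 * (-(t^2)⁻¹)) t :=
      (hasDerivAt_inv ht.ne').const_mul (B/2)
    have h2 : (fun t : ℝ => B/2 * t⁻¹) = fun t : ℝ => B/(2*t) := by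
      ext s; rw [mul_comm, inv_mul_eq_div, div_div]
    rw [h2] at h1
    rw [show -(B/(2*t^2)) = B/2 * (-(t^2)⁻¹) from by ring]
    exact h1.hasDerivWithinAt
  have key := integral_image_eq_integral_abs_deriv_smul measurableSet_Ioi hderiv hinj
    (fun v => v ^ (μ-1) * Real.exp (-(A*v)/2 - B/(2*v)))
  rw [himg] at key
  rw [key]
  have hz2 : (Real.sqrt (A*B))^2 = A*B := Real.sq_sqrt (by positivity)
  have hcong : ∀ t ∈ Set.Ioi (0:ℝ),
      |(-(B/(2*t^2)))| • ((fun v : ℝ => v ^ (μ-1) * Real.exp (-(A*v)/2 - B/(2*v))) (B/(2*t))) =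
      (B/2) ^ μ * (t ^ (-μ - 1) * Real.exp (-t - (Real.sqrt (A*B))^2 / (4*t))) := by
    intro t ht
    simp only [Set.mem_Ioi] at ht
    have hBt : (0:ℝ) < B/(2*t) := div_pos hB (by positivity)
    rw [hz2]
    simp only [smul_eq_mul, abs_neg, abs_of_pos (show (0:ℝ) < B/(2*t^2) by positivity)]
    have e1 : -(A*(B/(2*t)))/2 - B/(2*(B/(2*t))) = -t - A*B/(4*t) := by
      field_simp
      ring
    rw [e1]
    have hB2 : (0:ℝ) < B/2 := by positivity
    have hBpow : (B/2) * (B/2)^(μ-1) = (B/2)^μ := by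
      rw [Real.rpow_sub hB2, Real.rpow_one, mul_comm, div_mul_cancel₀ _ (ne_of_gt hB2)]
    have htpow : t^(-2:ℝ) * t^(-(μ-1)) = t^(-μ-1) := by
      rw [← Real.rpow_add ht]; ring_nf
    have e2 : B/(2*t^2) * (B/(2*t)) ^ (μ-1) = (B/2) ^ μ * t ^ (-μ-1) := by
      rw [show B/(2*t) = (B/2) * t⁻¹ from by rw [mul_comm (B/2), inv_mul_eq_div, div_div],
        Real.mul_rpow hB2.le (by positivity), Real.inv_rpow ht.le, ← Real.rpow_neg ht.le,
        show B/(2*t^2) = (B/2) * (t^2)⁻¹ from by rw [mul_comm (B/2), inv_mul_eq_div, div_div],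
        show ((t^2)⁻¹ : ℝ) = t ^ (-2 : ℝ) from by rw [Real.rpow_neg ht.le, Real.rpow_two],
        show (B/2) * t^(-2:ℝ) * ((B/2)^(μ-1) * t^(-(μ-1))) =
          ((B/2)*(B/2)^(μ-1)) * (t^(-2:ℝ)*t^(-(μ-1))) from by ring, hBpow, htpow]
    calc B/(2*t^2) * ((B/(2*t)) ^ (μ-1) * Real.exp (-t - A*B/(4*t)))
        = (B/(2*t^2) * (B/(2*t)) ^ (μ-1)) * Real.exp (-t - A*B/(4*t)) := by ring
      _ = (B/2) ^ μ * (t ^ (-μ-1) * Real.exp (-t - A*B/(4*t))) := by rw [e2]; ring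
  rw [setIntegral_congr_fun measurableSet_Ioi hcong, integral_const_mul]
  rw [besselK]
  have hfac : (B/2 : ℝ) ^ μ = 2 * (B/A) ^ (μ/2) * ((1/2) * (Real.sqrt (A*B)/2) ^ μ) := by
    have h1 : ((B/A : ℝ)) ^ (μ/2) = (Real.sqrt (B/A)) ^ μ := by
      rw [Real.sqrt_eq_rpow, ← Real.rpow_mul (by positivity : (0:ℝ) ≤ B/A)]
      ring_nf
    rw [h1, show (2:ℝ) * (Real.sqrt (B/A))^μ * ((1/2) * (Real.sqrt (A*B)/2)^μ) =
      (Real.sqrt (B/A))^μ * (Real.sqrt (A*B)/2)^μ from by ring,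
      ← Real.mul_rpow (Real.sqrt_nonneg _) (by positivity)]
    congr 1
    rw [mul_div_assoc', ← Real.sqrt_mul (by positivity : (0:ℝ) ≤ B/A),
      show B/A*(A*B) = B^2 from by field_simp, Real.sqrt_sq hB.le]
  rw [hfac]
  ring

/-- Generalized hyperbolic density by Bessel integration: if `X | V ~ N(λ + βV, V Σ)`
and `V ~ GIG(ν, a, b)`, the density of `X` at `x` is
`|Σ|^{-1/2}/(2π)^{d/2} (a/b)^{ν/2} exp((x−λ)ᵀΣ⁻¹β) (b̂/â)^{ν̂/2} K_ν̂(√(âb̂))/K_ν(√(ab))`,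
with `ν̂ = ν − d/2`, `â = βᵀΣ⁻¹β + a`, `b̂ = (x−λ)ᵀΣ⁻¹(x−λ) + b`. -/
theorem gh_density {d : ℕ} (lam beta : Fin d → ℝ) (S : Matrix (Fin d) (Fin d) ℝ)
    (hS : S.PosDef) (ν a b : ℝ) (ha : 0 < a) (hb : 0 < b) (x : Fin d → ℝ) :
    ∫ v in Set.Ioi (0:ℝ), mvnPdf (lam + v • beta) (v • S) x * gigPdf ν a b v =
      S.det ^ (-(1:ℝ)/2) / (2*Real.pi) ^ ((d:ℝ)/2) * (a/b) ^ (ν/2) *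
        Real.exp ((x - lam) ⬝ᵥ (S⁻¹ *ᵥ beta)) *
        (((x - lam) ⬝ᵥ (S⁻¹ *ᵥ (x - lam)) + b) / (beta ⬝ᵥ (S⁻¹ *ᵥ beta) + a))
          ^ ((ν - (d:ℝ)/2)/2) *
        besselK (ν - (d:ℝ)/2)
          (Real.sqrt ((beta ⬝ᵥ (S⁻¹ *ᵥ beta) + a) *
            ((x - lam) ⬝ᵥ (S⁻¹ *ᵥ (x - lam)) + b))) /
        besselK ν (Real.sqrt (a*b)) := by
  have hSinv : S⁻¹ᵀ = S⁻¹ := by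
    have h := hS.inv.isHermitian
    rwa [Matrix.IsHermitian, Matrix.conjTranspose_eq_transpose_of_trivial] at h
  have dot_symm : ∀ u w : Fin d → ℝ, u ⬝ᵥ S⁻¹ *ᵥ w = w ⬝ᵥ S⁻¹ *ᵥ u := by
    intro u w
    rw [Matrix.dotProduct_mulVec, ← Matrix.mulVec_transpose, hSinv, dotProduct_comm]
  set y := x - lam with hy
  set p := beta ⬝ᵥ S⁻¹ *ᵥ beta with hpdef
  set q := y ⬝ᵥ S⁻¹ *ᵥ y with hqdef
  set c := y ⬝ᵥ S⁻¹ *ᵥ beta with hcdef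
  set K := besselK ν (Real.sqrt (a*b)) with hKdef
  have hp : 0 ≤ p := by simpa using hS.inv.posSemidef.dotProduct_mulVec_nonneg beta
  have hq : 0 ≤ q := by simpa using hS.inv.posSemidef.dotProduct_mulVec_nonneg y
  have hA : 0 < p + a := by linarith
  have hB : 0 < q + b := by linarith
  set μ := ν - (d:ℝ)/2 with hμdef
  set C := (2*Real.pi) ^ (-(d:ℝ)/2) * S.det ^ (-(1:ℝ)/2) *
      ((a/b) ^ (ν/2) / (2 * K)) * Real.exp c with hCdef
  have hcong : ∀ v ∈ Set.Ioi (0:ℝ),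
      mvnPdf (lam + v • beta) (v • S) x * gigPdf ν a b v =
      C * (v ^ (μ - 1) * Real.exp (-((p+a)*v)/2 - (q+b)/(2*v))) := by
    intro v hv
    simp only [Set.mem_Ioi] at hv
    haveI : Invertible v := invertibleOfNonzero hv.ne'
    have hdet : (v • S).det ^ (-(1:ℝ)/2) = v ^ (-(d:ℝ)/2) * S.det ^ (-(1:ℝ)/2) := by
      rw [Matrix.det_smul, Fintype.card_fin, Real.mul_rpow (by positivity) hS.det_pos.le,
        ← Real.rpow_natCast v d, ← Real.rpow_mul hv.le,
        show ((d:ℝ) * (-(1:ℝ)/2)) = -(d:ℝ)/2 from by ring]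
    have hinv : (v • S)⁻¹ = v⁻¹ • S⁻¹ := by
      rw [Matrix.inv_smul (A := S) (k := v) (isUnit_iff_ne_zero.mpr hS.det_pos.ne'), invOf_eq_inv]
    have hvec : x - (lam + v • beta) = y - v • beta := by rw [hy, sub_add_eq_sub_sub]
    have expand : (y - v•beta) ⬝ᵥ S⁻¹ *ᵥ (y - v•beta) = q - 2*(v*c) + v^2*p := by
      simp only [Matrix.mulVec_sub, Matrix.mulVec_smul, dotProduct_sub, sub_dotProduct,
        dotProduct_smul, smul_dotProduct, smul_eq_mul]
      rw [dot_symm beta y, ← hqdef, ← hcdef, ← hpdef]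
      ring
    have hquad : (y - v•beta) ⬝ᵥ (v⁻¹ • S⁻¹) *ᵥ (y - v•beta) = v⁻¹ * (q - 2*(v*c) + v^2*p) := by
      rw [Matrix.smul_mulVec, dotProduct_smul, smul_eq_mul, expand]
    have hE : Real.exp (-(1/2) * (v⁻¹ * (q - 2*(v*c) + v^2*p))) *
        Real.exp (-(a*v)/2 - b/(2*v)) =
        Real.exp c * Real.exp (-((p+a)*v)/2 - (q+b)/(2*v)) := by
      rw [← Real.exp_add, ← Real.exp_add]
      congr 1
      field_simp
      ring
    have hV : v ^ (-(d:ℝ)/2) * v ^ (ν-1) = v ^ (μ - 1) := by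
      rw [← Real.rpow_add hv, hμdef]
      ring_nf
    rw [mvnPdf, gigPdf, if_pos hv, hvec, hinv, hdet, hquad]
    calc (2*Real.pi) ^ (-(d:ℝ)/2) * (v ^ (-(d:ℝ)/2) * S.det ^ (-(1:ℝ)/2)) *
          Real.exp (-(1/2) * (v⁻¹ * (q - 2*(v*c) + v^2*p))) *
          ((a/b) ^ (ν/2) * v ^ (ν-1) / (2 * K) * Real.exp (-(a*v)/2 - b/(2*v)))
        = (v ^ (-(d:ℝ)/2) * v ^ (ν-1)) *
          (Real.exp (-(1/2) * (v⁻¹ * (q - 2*(v*c) + v^2*p))) * Real.exp (-(a*v)/2 - b/(2*v))) *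
          ((2*Real.pi) ^ (-(d:ℝ)/2) * S.det ^ (-(1:ℝ)/2) * ((a/b) ^ (ν/2) / (2 * K))) := by
          ring
      _ = C * (v ^ (μ - 1) * Real.exp (-((p+a)*v)/2 - (q+b)/(2*v))) := by
          rw [hE, hV, hCdef]; ring
  rw [setIntegral_congr_fun measurableSet_Ioi hcong, integral_const_mul,
    bessel_integral μ (p+a) (q+b) hA hB, hCdef]
  have h2pi : (2*Real.pi) ^ (-(d:ℝ)/2) = ((2*Real.pi) ^ ((d:ℝ)/2))⁻¹ := by
    rw [show (-(d:ℝ)/2) = -((d:ℝ)/2) from by ring, Real.rpow_neg (by positivity)]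
  rw [h2pi]
  simp only [div_eq_mul_inv, _root_.mul_inv_rev]
  ring
end

section
/- The multivariate NIG density: if X = λ + β V + √V Q^{-1/2} Z with V ~ IG(τ, √(τ/2)) and Z ~ N(0, I_d) independent, then X has density f(x) = √(τ |Q|) / (2π)^{(d+1)/2} · exp((x − λ)^T Q β + √(2τ)) · 2 K_ν(√(ab)) (b/a)^{ν/2}, where ν = −(d+1)/2, a = β^T Q β + 2, b = (x − λ)^T Q (x − λ) + τ. -/
open MeasureTheory Real Matrix

/-- Density of the inverse Gaussian distribution IG(τ, δ). -/
noncomputable def igPdf (τ δ v : ℝ) : ℝ :=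
  if 0 < v then
    Real.sqrt τ / Real.sqrt (2*Real.pi*v^3) * Real.exp (-(τ*(v - δ)^2)/(2*δ^2*v))
  else 0

lemma besselK_integral (ν a b : ℝ) (ha : 0 < a) (hb : 0 < b) :
    (∫ v in Set.Ioi (0:ℝ), v ^ (ν - 1) * Real.exp (-(a*v + b/v)/2))
      = 2 * besselK ν (Real.sqrt (a*b)) * (b/a) ^ (ν/2) := by
  have hb2 : 0 < b/2 := by linarith
  set f : ℝ → ℝ := fun v => v ^ (ν - 1) * Real.exp (-(a*v + b/v)/2) with hf
  have h1 : (∫ x in Set.Ioi (0:ℝ), f ((b/2) * x)) = (b/2)⁻¹ • ∫ v in Set.Ioi (0:ℝ), f v := by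
    simpa using integral_comp_mul_left_Ioi f 0 hb2
  have h2 : (∫ x in Set.Ioi (0:ℝ), (|(-1:ℝ)| * x ^ ((-1:ℝ) - 1)) • f ((b/2) * x ^ (-1:ℝ)))
      = ∫ x in Set.Ioi (0:ℝ), f ((b/2) * x) :=
    integral_comp_rpow_Ioi (fun x => f ((b/2) * x)) (by norm_num : (-1:ℝ) ≠ 0)
  have h3 : ∀ t ∈ Set.Ioi (0:ℝ),
      (|(-1:ℝ)| * t ^ ((-1:ℝ) - 1)) • f ((b/2) * t ^ (-1:ℝ))
        = (b/2) ^ (ν - 1) * (t ^ (-ν - 1) * Real.exp (-t - (a*b) / (4*t))) := by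
    intro t ht
    have ht0 : 0 < t := ht
    have htne : t ≠ 0 := ht0.ne'
    rw [Real.rpow_neg_one]
    have hbt : (b/2) * t⁻¹ = b / (2*t) := by field_simp
    rw [hf]
    simp only [smul_eq_mul, abs_neg, abs_one, one_mul]
    have e1 : (b / (2*t)) ^ (ν - 1) = (b/2) ^ (ν - 1) * t ^ (1 - ν) := by
      rw [show b / (2*t) = (b/2) / t by ring, Real.div_rpow hb2.le ht0.le,
        div_eq_mul_inv, ← Real.rpow_neg ht0.le]
      ring_nf
    have e3 : -(a * (b / (2*t)) + b / (b / (2*t))) / 2 = -t - (a*b)/(4*t) := by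
      field_simp; ring
    rw [hbt, e1, e3,
      show t ^ ((-1:ℝ)-1) * ((b/2)^(ν-1) * t ^ (1-ν) * Real.exp (-t - a*b/(4*t)))
        = (b/2)^(ν-1) * ((t ^ ((-1:ℝ)-1) * t ^ (1-ν)) * Real.exp (-t - a*b/(4*t))) by ring,
      ← Real.rpow_add ht0, show ((-1:ℝ)-1) + (1-ν) = -ν - 1 by ring]
  rw [setIntegral_congr_fun measurableSet_Ioi h3, integral_const_mul, h1] at h2
  have hI : (∫ v in Set.Ioi (0:ℝ), f v)
      = (b/2) ^ ν * ∫ t in Set.Ioi (0:ℝ), t ^ (-ν - 1) * Real.exp (-t - (a*b) / (4*t)) := by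
    rw [smul_eq_mul] at h2
    have h4 : (∫ v in Set.Ioi (0:ℝ), f v)
        = (b/2) * ((b/2)⁻¹ * ∫ v in Set.Ioi (0:ℝ), f v) :=
      (mul_inv_cancel_left₀ hb2.ne' _).symm
    rw [h4, ← h2, ← mul_assoc,
      show ν = 1 + (ν-1) by ring, Real.rpow_add hb2, Real.rpow_one]
    ring_nf
  rw [hI, besselK, Real.sq_sqrt (mul_nonneg ha.le hb.le)]
  have hc : (Real.sqrt (a*b)/2) ^ ν * (b/a) ^ (ν/2) = (b/2) ^ ν := by
    rw [Real.sqrt_eq_rpow,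
      Real.div_rpow (Real.rpow_nonneg (mul_nonneg ha.le hb.le) _) (by norm_num : (0:ℝ) ≤ 2),
      ← Real.rpow_mul (mul_nonneg ha.le hb.le), show (1/2) * ν = ν/2 by ring,
      Real.mul_rpow ha.le hb.le, Real.div_rpow hb.le ha.le,
      Real.div_rpow hb.le (by norm_num : (0:ℝ) ≤ 2)]
    have hbb : b ^ (ν/2) * b ^ (ν/2) = b ^ ν := by
      rw [← Real.rpow_add hb]; ring_nf
    have hane : a ^ (ν/2) ≠ 0 := (Real.rpow_pos_of_pos ha _).ne'
    field_simp
    rw [← hbb]; ring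
  rw [← hc]; ring

lemma nig_pointwise {d : ℕ} (lam beta : Fin d → ℝ) (Q : Matrix (Fin d) (Fin d) ℝ)
    (hQ : Q.PosDef) (τ : ℝ) (hτ : 0 < τ) (x : Fin d → ℝ) (v : ℝ) (hv : 0 < v) :
    mvnPdf (lam + v • beta) (v • Q⁻¹) x * igPdf τ (Real.sqrt (τ/2)) v
    = (Real.sqrt (τ * Q.det) / (2*Real.pi) ^ (((d:ℝ)+1)/2) *
        Real.exp ((x - lam) ⬝ᵥ (Q *ᵥ beta) + Real.sqrt (2*τ))) *
      (v ^ ((-((d:ℝ)+1)/2) - 1) *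
        Real.exp (-((beta ⬝ᵥ (Q *ᵥ beta) + 2) * v +
          ((x - lam) ⬝ᵥ (Q *ᵥ (x - lam)) + τ) / v)/2)) := by
  have hd : 0 < Q.det := hQ.det_pos
  have hQu : IsUnit Q.det := isUnit_iff_ne_zero.mpr hd.ne'
  have hvne : v ≠ 0 := hv.ne'
  haveI : Invertible v := invertibleOfNonzero hvne
  have hQs : Qᵀ = Q := by
    have := hQ.1
    rwa [Matrix.IsHermitian, Matrix.conjTranspose_eq_transpose_of_trivial] at this
  have hsymm : ∀ u w : Fin d → ℝ, u ⬝ᵥ Q *ᵥ w = w ⬝ᵥ Q *ᵥ u := by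
    intro u w
    rw [Matrix.dotProduct_mulVec, ← Matrix.mulVec_transpose, hQs, dotProduct_comm]
  -- inverse of the scaled matrix
  have hQdetinv : Q⁻¹.det = Q.det⁻¹ := by
    rw [Matrix.det_nonsing_inv, Ring.inverse_eq_inv]
  have hinv : (v • Q⁻¹)⁻¹ = v⁻¹ • Q := by
    rw [Q⁻¹.inv_smul v (Q.isUnit_nonsing_inv_det hQu), Matrix.nonsing_inv_nonsing_inv Q hQu,
      invOf_eq_inv]
  -- determinant
  have hdet : (v • Q⁻¹).det = v^d * Q.det⁻¹ := by
    rw [Matrix.det_smul, hQdetinv, Fintype.card_fin]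
  have hdetpow : ((v:ℝ)^d * Q.det⁻¹) ^ (-(1:ℝ)/2) = v ^ (-(d:ℝ)/2) * Q.det ^ ((1:ℝ)/2) := by
    rw [Real.mul_rpow (pow_nonneg hv.le d) (inv_nonneg.mpr hd.le),
      ← Real.rpow_natCast v d, ← Real.rpow_mul hv.le,
      show Q.det⁻¹ = Q.det ^ (-1:ℝ) from (Real.rpow_neg_one _).symm,
      ← Real.rpow_mul hd.le]
    congr 1
    · congr 1; ring
    · congr 1; norm_num
  -- quadratic form
  have hquad : (x - (lam + v • beta)) ⬝ᵥ ((v⁻¹ • Q) *ᵥ (x - (lam + v • beta)))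
      = v⁻¹ * ((x - lam) ⬝ᵥ Q *ᵥ (x - lam) - 2*v*((x - lam) ⬝ᵥ Q *ᵥ beta) + v^2*(beta ⬝ᵥ Q *ᵥ beta)) := by
    rw [sub_add_eq_sub_sub]
    simp only [Matrix.smul_mulVec, Matrix.mulVec_sub, Matrix.mulVec_smul,
      dotProduct_sub, sub_dotProduct, dotProduct_smul, smul_dotProduct, smul_eq_mul]
    rw [hsymm beta x, hsymm beta lam]
    ring
  -- ig pieces
  have hδ : Real.sqrt (τ/2) ^ 2 = τ/2 := Real.sq_sqrt (by positivity)
  have h2d : 2 * Real.sqrt (τ/2) = Real.sqrt (2*τ) := by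
    rw [show (2:ℝ)*τ = 2^2*(τ/2) by ring, Real.sqrt_mul (by positivity),
      Real.sqrt_sq (by norm_num : (0:ℝ) ≤ 2)]
  have hE2 : -(τ*(v - Real.sqrt (τ/2))^2) / (2*(Real.sqrt (τ/2))^2*v)
      = -v + Real.sqrt (2*τ) - τ/(2*v) := by
    have hexpand : (v - Real.sqrt (τ/2))^2 = v^2 - Real.sqrt (2*τ)*v + τ/2 := by
      have h0 : (v - Real.sqrt (τ/2))^2 = v^2 - 2*Real.sqrt (τ/2)*v + Real.sqrt (τ/2)^2 := by
        ring
      rw [h0, hδ, h2d]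
    rw [hδ, hexpand]
    field_simp
    ring
  have hsqrt3 : Real.sqrt (2*Real.pi*v^3) = (2*Real.pi) ^ ((1:ℝ)/2) * v ^ ((3:ℝ)/2) := by
    rw [show 2*Real.pi*v^3 = (2*Real.pi)*(v^3) by ring,
      Real.sqrt_mul (by positivity), Real.sqrt_eq_rpow, Real.sqrt_eq_rpow,
      ← Real.rpow_natCast v 3, ← Real.rpow_mul hv.le]
    norm_num
  -- combination lemmas
  have hπ : (2*Real.pi) ^ (-(d:ℝ)/2) * ((2*Real.pi) ^ ((1:ℝ)/2))⁻¹
      = ((2*Real.pi) ^ (((d:ℝ)+1)/2))⁻¹ := by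
    rw [← Real.rpow_neg (by positivity), ← Real.rpow_add (by positivity),
      ← Real.rpow_neg (by positivity)]
    congr 1; ring
  have hv32 : v ^ (-(d:ℝ)/2) * (v ^ ((3:ℝ)/2))⁻¹ = v ^ ((-((d:ℝ)+1)/2) - 1) := by
    rw [← Real.rpow_neg hv.le, ← Real.rpow_add hv]
    congr 1; ring
  have hτdet : Real.sqrt (τ * Q.det) = Real.sqrt τ * Q.det ^ ((1:ℝ)/2) := by
    rw [Real.sqrt_mul hτ.le, Real.sqrt_eq_rpow Q.det]
  have hexp : Real.exp (-(1/2) * (v⁻¹ * ((x - lam) ⬝ᵥ Q *ᵥ (x - lam) - 2*v*((x - lam) ⬝ᵥ Q *ᵥ beta)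
        + v^2*(beta ⬝ᵥ Q *ᵥ beta))))
      * Real.exp (-v + Real.sqrt (2*τ) - τ/(2*v))
      = Real.exp ((x - lam) ⬝ᵥ Q *ᵥ beta + Real.sqrt (2*τ))
      * Real.exp (-((beta ⬝ᵥ Q *ᵥ beta + 2) * v + ((x - lam) ⬝ᵥ Q *ᵥ (x - lam) + τ) / v)/2) := by
    rw [← Real.exp_add, ← Real.exp_add]
    congr 1
    field_simp
    ring
  -- put together
  rw [mvnPdf, igPdf, if_pos hv, hinv, hdet, hdetpow, hquad, hE2, hsqrt3]
  rw [show (2*Real.pi) ^ (-(d:ℝ)/2) * (v ^ (-(d:ℝ)/2) * Q.det ^ ((1:ℝ)/2)) *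
      Real.exp (-(1/2) * (v⁻¹ * ((x - lam) ⬝ᵥ Q *ᵥ (x - lam) - 2*v*((x - lam) ⬝ᵥ Q *ᵥ beta) + v^2*(beta ⬝ᵥ Q *ᵥ beta)))) *
      (Real.sqrt τ / ((2*Real.pi) ^ ((1:ℝ)/2) * v ^ ((3:ℝ)/2)) *
        Real.exp (-v + Real.sqrt (2*τ) - τ/(2*v)))
      = ((2*Real.pi) ^ (-(d:ℝ)/2) * ((2*Real.pi) ^ ((1:ℝ)/2))⁻¹) *
        (v ^ (-(d:ℝ)/2) * (v ^ ((3:ℝ)/2))⁻¹) * (Real.sqrt τ * Q.det ^ ((1:ℝ)/2)) *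
        (Real.exp (-(1/2) * (v⁻¹ * ((x - lam) ⬝ᵥ Q *ᵥ (x - lam) - 2*v*((x - lam) ⬝ᵥ Q *ᵥ beta) + v^2*(beta ⬝ᵥ Q *ᵥ beta)))) *
          Real.exp (-v + Real.sqrt (2*τ) - τ/(2*v))) from by
    field_simp]
  rw [hπ, hv32, hexp, hτdet]
  ring

/-- The multivariate NIG density: if `X = λ + βV + √V Q^{-1/2} Z` with
`V ~ IG(τ, √(τ/2))` and `Z ~ N(0, I_d)` independent (so `X | V = v ~ N(λ + βv, v Q⁻¹)`),
then `X` has density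
`f(x) = √(τ|Q|)/(2π)^{(d+1)/2} exp((x−λ)ᵀQβ + √(2τ)) · 2 K_ν(√(ab)) (b/a)^{ν/2}`,
where `ν = −(d+1)/2`, `a = βᵀQβ + 2`, `b = (x−λ)ᵀQ(x−λ) + τ`. -/
theorem nig_density {d : ℕ} (lam beta : Fin d → ℝ) (Q : Matrix (Fin d) (Fin d) ℝ)
    (hQ : Q.PosDef) (τ : ℝ) (hτ : 0 < τ) (x : Fin d → ℝ) :
    ∫ v in Set.Ioi (0:ℝ),
        mvnPdf (lam + v • beta) (v • Q⁻¹) x * igPdf τ (Real.sqrt (τ/2)) v =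
      Real.sqrt (τ * Q.det) / (2*Real.pi) ^ (((d:ℝ)+1)/2) *
        Real.exp ((x - lam) ⬝ᵥ (Q *ᵥ beta) + Real.sqrt (2*τ)) *
        (2 * besselK (-((d:ℝ)+1)/2)
          (Real.sqrt ((beta ⬝ᵥ (Q *ᵥ beta) + 2) *
            ((x - lam) ⬝ᵥ (Q *ᵥ (x - lam)) + τ)))) *
        (((x - lam) ⬝ᵥ (Q *ᵥ (x - lam)) + τ) / (beta ⬝ᵥ (Q *ᵥ beta) + 2))
          ^ ((-((d:ℝ)+1)/2)/2) := by
  have hbQb : (0:ℝ) ≤ beta ⬝ᵥ Q *ᵥ beta := by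
    rcases eq_or_ne beta 0 with h | h
    · simp [h]
    · exact le_of_lt (by simpa using hQ.dotProduct_mulVec_pos h)
  have hyQy : (0:ℝ) ≤ (x - lam) ⬝ᵥ Q *ᵥ (x - lam) := by
    rcases eq_or_ne (x - lam) 0 with h | h
    · simp [h]
    · exact le_of_lt (by simpa using hQ.dotProduct_mulVec_pos h)
  have ha : 0 < beta ⬝ᵥ Q *ᵥ beta + 2 := by linarith
  have hb : 0 < (x - lam) ⬝ᵥ Q *ᵥ (x - lam) + τ := by linarith
  have hpt : ∀ v ∈ Set.Ioi (0:ℝ),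
      mvnPdf (lam + v • beta) (v • Q⁻¹) x * igPdf τ (Real.sqrt (τ/2)) v
      = (Real.sqrt (τ * Q.det) / (2*Real.pi) ^ (((d:ℝ)+1)/2) *
          Real.exp ((x - lam) ⬝ᵥ (Q *ᵥ beta) + Real.sqrt (2*τ))) *
        (v ^ ((-((d:ℝ)+1)/2) - 1) *
          Real.exp (-((beta ⬝ᵥ (Q *ᵥ beta) + 2) * v +
            ((x - lam) ⬝ᵥ (Q *ᵥ (x - lam)) + τ) / v)/2)) :=
    fun v hv => nig_pointwise lam beta Q hQ τ hτ x v hv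
  rw [setIntegral_congr_fun measurableSet_Ioi hpt, integral_const_mul,
    besselK_integral (-((d:ℝ)+1)/2) _ _ ha hb]
  ring
end

section
/- Conditional law of the NIG distribution: if X ~ NIG(λ, Q, β, τ) is partitioned as (X^A, X^B), then X^A | X^B = x^B has a generalized hyperbolic distribution GH(λ̃, Q^{AA}, β̃, ν̂, â, b̂) with λ̃ = λ^A − (Q^{AA})^{-1} Q^{AB}(x^B − λ^B), β̃ = β^A + (Q^{AA})^{-1} Q^{AB} β^B, ν̂ = −(|B|+1)/2, â = (β^B)^T (Σ^{BB})^{-1} β^B + 2, b̂ = (x^B − λ^B)^T (Σ^{BB})^{-1}(x^B − λ^B) + τ. -/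
open MeasureTheory Real Matrix

/-- The multivariate NIG(λ, Q, β, τ) density on `ι → ℝ`. -/
noncomputable def nigPdf {ι : Type*} [Fintype ι] [DecidableEq ι]
    (lam : ι → ℝ) (Q : Matrix ι ι ℝ) (beta : ι → ℝ) (τ : ℝ) (x : ι → ℝ) : ℝ :=
  Real.sqrt (τ * Q.det) / (2*Real.pi) ^ (((Fintype.card ι : ℝ)+1)/2) *
    Real.exp ((x - lam) ⬝ᵥ (Q *ᵥ beta) + Real.sqrt (2*τ)) *
    (2 * besselK (-((Fintype.card ι : ℝ)+1)/2)
      (Real.sqrt ((beta ⬝ᵥ (Q *ᵥ beta) + 2) * ((x - lam) ⬝ᵥ (Q *ᵥ (x - lam)) + τ)))) *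
    (((x - lam) ⬝ᵥ (Q *ᵥ (x - lam)) + τ) / (beta ⬝ᵥ (Q *ᵥ beta) + 2))
      ^ ((-((Fintype.card ι : ℝ)+1)/2)/2)

/-- The generalized hyperbolic GH(μ, P, γ, ν, a, b) density (precision matrix `P`):
the law of `μ + γW + √W P^{-1/2} Z'` with `W ~ GIG(ν, a, b)` and `Z'` standard Gaussian. -/
noncomputable def ghPdf {ι : Type*} [Fintype ι] [DecidableEq ι]
    (mu : ι → ℝ) (P : Matrix ι ι ℝ) (gam : ι → ℝ) (ν a b : ℝ) (x : ι → ℝ) : ℝ :=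
  Real.sqrt P.det / (2*Real.pi) ^ ((Fintype.card ι : ℝ)/2) * (a/b) ^ (ν/2) *
    Real.exp ((x - mu) ⬝ᵥ (P *ᵥ gam)) *
    (((x - mu) ⬝ᵥ (P *ᵥ (x - mu)) + b) / (gam ⬝ᵥ (P *ᵥ gam) + a))
      ^ ((ν - (Fintype.card ι : ℝ)/2)/2) *
    besselK (ν - (Fintype.card ι : ℝ)/2)
      (Real.sqrt ((gam ⬝ᵥ (P *ᵥ gam) + a) * ((x - mu) ⬝ᵥ (P *ᵥ (x - mu)) + b))) /
    besselK ν (Real.sqrt (a*b))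

lemma exp_neg_le' (x : ℝ) (hx : 0 < x) (n : ℕ) :
    Real.exp (-x) ≤ n.factorial / x ^ n := by
  rw [Real.exp_neg, inv_le_iff_one_le_mul₀ (Real.exp_pos x), div_mul_eq_mul_div,
    le_div_iff₀ (by positivity)]
  have := Real.pow_div_factorial_le_exp x hx.le n
  rw [div_le_iff₀ (by positivity)] at this
  nlinarith [this]

lemma besselK_integrableOn (c z : ℝ) (hz : 0 < z) :
    IntegrableOn (fun t : ℝ => t ^ c * Real.exp (-t - z^2 / (4*t))) (Set.Ioi 0) := by
  have hmeas : Measurable (fun t : ℝ => t ^ c * Real.exp (-t - z^2 / (4*t))) := by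
    fun_prop
  have h1 : IntegrableOn (fun t : ℝ => t ^ c * Real.exp (-t - z^2 / (4*t))) (Set.Ioc 0 1) := by
    set n : ℕ := ⌈-c⌉₊ with hn
    have hcn : (-1 : ℝ) < c + n := by
      have := Nat.le_ceil (-c)
      simp only [← hn] at this
      linarith
    have hint : IntegrableOn (fun t : ℝ => (n.factorial * 4^n / z^(2*n)) * t ^ (c + n)) (Set.Ioc 0 1) := by
      apply Integrable.const_mul
      have := (intervalIntegral.intervalIntegrable_rpow' (a := 0) (b := 1) hcn)
      rw [intervalIntegrable_iff, Set.uIoc_of_le (by norm_num)] at this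
      exact this
    refine hint.mono' (hmeas.aestronglyMeasurable) ?_
    filter_upwards [ae_restrict_mem measurableSet_Ioc] with t ht
    obtain ⟨ht0, ht1⟩ := ht
    have hw : 0 < z^2 / (4*t) := by positivity
    rw [Real.norm_eq_abs, abs_of_nonneg (by positivity)]
    have e1 : Real.exp (-t - z^2/(4*t)) ≤ Real.exp (-(z^2/(4*t))) := by
      apply Real.exp_le_exp.2; linarith
    have e2 : Real.exp (-(z^2/(4*t))) ≤ n.factorial / (z^2/(4*t))^n := exp_neg_le' _ hw n
    have e3 : (n.factorial : ℝ) / (z^2/(4*t))^n = (n.factorial * 4^n / z^(2*n)) * t^(n:ℕ) := by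
      rw [div_pow, pow_mul]
      field_simp
      ring
    calc t ^ c * Real.exp (-t - z^2/(4*t))
        ≤ t ^ c * ((n.factorial * 4^n / z^(2*n)) * t^(n:ℕ)) := by
          apply mul_le_mul_of_nonneg_left _ (by positivity)
          rw [← e3]; exact e1.trans e2
      _ = (n.factorial * 4^n / z^(2*n)) * t ^ (c + n) := by
          rw [Real.rpow_add ht0, Real.rpow_natCast]; ring
  have h2 : IntegrableOn (fun t : ℝ => t ^ c * Real.exp (-t - z^2 / (4*t))) (Set.Ioi 1) := by
    set m : ℕ := ⌈c⌉₊ + 2 with hm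
    have hcm : c - m < -1 := by
      have := Nat.le_ceil c
      push_cast [hm]
      linarith
    have hint : IntegrableOn (fun t : ℝ => (m.factorial : ℝ) * t ^ (c - m)) (Set.Ioi 1) :=
      (integrableOn_Ioi_rpow_of_lt hcm one_pos).const_mul _
    refine hint.mono' (hmeas.aestronglyMeasurable) ?_
    filter_upwards [ae_restrict_mem measurableSet_Ioi] with t ht
    have ht0 : (0:ℝ) < t := lt_trans one_pos ht
    rw [Real.norm_eq_abs, abs_of_nonneg (by positivity)]
    have e1 : Real.exp (-t - z^2/(4*t)) ≤ Real.exp (-t) := by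
      apply Real.exp_le_exp.2
      have : 0 < z^2/(4*t) := by positivity
      linarith
    have e2 : Real.exp (-t) ≤ m.factorial / t^m := exp_neg_le' _ ht0 m
    calc t ^ c * Real.exp (-t - z^2/(4*t))
        ≤ t ^ c * (m.factorial / t^m) := by
          apply mul_le_mul_of_nonneg_left (e1.trans e2) (by positivity)
      _ = (m.factorial : ℝ) * t ^ (c - m) := by
          rw [Real.rpow_sub ht0, Real.rpow_natCast]
          field_simp
  have := h1.union h2
  rwa [Set.Ioc_union_Ioi_eq_Ioi (by norm_num : (0:ℝ) ≤ 1)] at this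

lemma besselK_pos (ν z : ℝ) (hz : 0 < z) : 0 < besselK ν z := by
  unfold besselK
  apply mul_pos (mul_pos (by norm_num) (Real.rpow_pos_of_pos (by linarith) ν))
  rw [setIntegral_pos_iff_support_of_nonneg_ae ?_ (besselK_integrableOn _ _ hz)]
  · have hsub : Set.Ioi (0:ℝ) ⊆
        Function.support (fun t : ℝ => t ^ (-ν-1) * Real.exp (-t - z^2 / (4*t))) ∩ Set.Ioi 0 := by
      intro t ht
      have ht0 : (0:ℝ) < t := ht
      refine ⟨?_, ht⟩
      simp only [Function.mem_support]
      positivity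
    have h0 : (0:ENNReal) < volume (Set.Ioi (0:ℝ)) := by
      rw [Real.volume_Ioi]; exact ENNReal.zero_lt_top
    exact lt_of_lt_of_le h0 (measure_mono hsub)
  · filter_upwards [ae_restrict_mem measurableSet_Ioi] with t ht
    have ht0 : (0:ℝ) < t := ht
    positivity


variable {dA dB : ℕ}

lemma mulVec_dp {m n : Type*} [Fintype m] [Fintype n] (M : Matrix m n ℝ) (a : n → ℝ) (w : m → ℝ) :
    (M *ᵥ a) ⬝ᵥ w = a ⬝ᵥ (Mᵀ *ᵥ w) := by
  rw [Matrix.dotProduct_mulVec, Matrix.vecMul_transpose]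

-- positive definiteness of the diagonal blocks
lemma posDef_toBlocks₁₁ {M : Matrix (Fin dA ⊕ Fin dB) (Fin dA ⊕ Fin dB) ℝ}
    (hM : M.PosDef) : M.toBlocks₁₁.PosDef := by
  rw [Matrix.posDef_iff_dotProduct_mulVec]
  constructor
  · have h := hM.1
    ext i j
    have := congrFun (congrFun h (Sum.inl i)) (Sum.inl j)
    simpa [Matrix.conjTranspose_apply, Matrix.toBlocks₁₁] using this
  · intro x hx
    have hv : Sum.elim x (0 : Fin dB → ℝ) ≠ 0 := by
      intro h
      apply hx
      ext i
      exact congrFun h (Sum.inl i)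
    have := hM.dotProduct_mulVec_pos hv
    rw [← Matrix.fromBlocks_toBlocks M, Matrix.fromBlocks_mulVec] at this
    simpa [sumElim_dotProduct_sumElim, Matrix.mulVec_zero] using this

lemma posDef_toBlocks₂₂ {M : Matrix (Fin dA ⊕ Fin dB) (Fin dA ⊕ Fin dB) ℝ}
    (hM : M.PosDef) : M.toBlocks₂₂.PosDef := by
  rw [Matrix.posDef_iff_dotProduct_mulVec]
  constructor
  · have h := hM.1
    ext i j
    have := congrFun (congrFun h (Sum.inr i)) (Sum.inr j)
    simpa [Matrix.conjTranspose_apply, Matrix.toBlocks₂₂] using this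
  · intro x hx
    have hv : Sum.elim (0 : Fin dA → ℝ) x ≠ 0 := by
      intro h
      apply hx
      ext i
      exact congrFun h (Sum.inr i)
    have := hM.dotProduct_mulVec_pos hv
    rw [← Matrix.fromBlocks_toBlocks M, Matrix.fromBlocks_mulVec] at this
    simpa [sumElim_dotProduct_sumElim, Matrix.mulVec_zero] using this

-- Schur complement identity
lemma schur_eq {Q : Matrix (Fin dA ⊕ Fin dB) (Fin dA ⊕ Fin dB) ℝ} (hQ : Q.PosDef) :
    (Q⁻¹.toBlocks₂₂)⁻¹ =
      Q.toBlocks₂₂ - Q.toBlocks₂₁ * (Q.toBlocks₁₁)⁻¹ * Q.toBlocks₁₂ := by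
  have hQd : IsUnit Q.det := (hQ.det_pos).ne'.isUnit
  have hA : (Q.toBlocks₁₁).PosDef := posDef_toBlocks₁₁ hQ
  have hAd : IsUnit (Q.toBlocks₁₁).det := hA.det_pos.ne'.isUnit
  set S := Q⁻¹ with hSdef
  have h1 : Q * S = 1 := Matrix.mul_nonsing_inv Q hQd
  rw [← Matrix.fromBlocks_toBlocks Q, ← Matrix.fromBlocks_toBlocks S,
    Matrix.fromBlocks_multiply, ← Matrix.fromBlocks_one] at h1
  have h12 := congrArg Matrix.toBlocks₁₂ h1
  have h22 := congrArg Matrix.toBlocks₂₂ h1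
  simp only [Matrix.toBlocks_fromBlocks₁₂, Matrix.toBlocks_fromBlocks₂₂] at h12 h22
  have hS12 : S.toBlocks₁₂ = -((Q.toBlocks₁₁)⁻¹ * (Q.toBlocks₁₂ * S.toBlocks₂₂)) := by
    have h := congrArg (fun M => (Q.toBlocks₁₁)⁻¹ * M) h12
    simp only [Matrix.mul_add, ← Matrix.mul_assoc, Matrix.nonsing_inv_mul _ hAd,
      Matrix.one_mul, Matrix.mul_zero] at h
    rw [Matrix.mul_assoc] at h
    exact eq_neg_of_add_eq_zero_left h
  have key : (Q.toBlocks₂₂ - Q.toBlocks₂₁ * (Q.toBlocks₁₁)⁻¹ * Q.toBlocks₁₂) * S.toBlocks₂₂ = 1 := by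
    rw [hS12, Matrix.mul_neg, neg_add_eq_iff_eq_add] at h22
    rw [Matrix.sub_mul]
    rw [show Q.toBlocks₂₁ * (Q.toBlocks₁₁)⁻¹ * Q.toBlocks₁₂ * S.toBlocks₂₂
        = Q.toBlocks₂₁ * ((Q.toBlocks₁₁)⁻¹ * (Q.toBlocks₁₂ * S.toBlocks₂₂)) by
      simp [Matrix.mul_assoc]]
    rw [h22]
    abel
  exact Matrix.inv_eq_left_inv key

-- the key bilinear identity
lemma key_bilinear (A : Matrix (Fin dA) (Fin dA) ℝ) (B : Matrix (Fin dA) (Fin dB) ℝ)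
    (D : Matrix (Fin dB) (Fin dB) ℝ) (hA : Aᵀ = A) (hAd : IsUnit A.det)
    (sA tA : Fin dA → ℝ) (sB tB : Fin dB → ℝ) :
    Sum.elim sA sB ⬝ᵥ (Matrix.fromBlocks A B Bᵀ D *ᵥ Sum.elim tA tB)
      = (sA + A⁻¹ *ᵥ (B *ᵥ sB)) ⬝ᵥ (A *ᵥ (tA + A⁻¹ *ᵥ (B *ᵥ tB)))
        + sB ⬝ᵥ ((D - Bᵀ * A⁻¹ * B) *ᵥ tB) := by
  have hAi : A * A⁻¹ = 1 := Matrix.mul_nonsing_inv A hAd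
  have hAi' : A⁻¹ * A = 1 := Matrix.nonsing_inv_mul A hAd
  have hAit : (A⁻¹)ᵀ = A⁻¹ := by rw [Matrix.transpose_nonsing_inv, hA]
  have e0 : A *ᵥ (A⁻¹ *ᵥ (B *ᵥ tB)) = B *ᵥ tB := by
    rw [Matrix.mulVec_mulVec, Matrix.mulVec_mulVec, hAi, Matrix.one_mul]
  have e1 : (A⁻¹ *ᵥ (B *ᵥ sB)) ⬝ᵥ (A *ᵥ tA) = sB ⬝ᵥ (Bᵀ *ᵥ tA) := by
    rw [Matrix.mulVec_mulVec, mulVec_dp, Matrix.transpose_mul, hAit, Matrix.mulVec_mulVec,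
      Matrix.mul_assoc, hAi', Matrix.mul_one]
  have e2 : (A⁻¹ *ᵥ (B *ᵥ sB)) ⬝ᵥ (B *ᵥ tB) = sB ⬝ᵥ ((Bᵀ * A⁻¹ * B) *ᵥ tB) := by
    rw [Matrix.mulVec_mulVec, mulVec_dp, Matrix.transpose_mul, hAit, Matrix.mulVec_mulVec,
      Matrix.mul_assoc]
  rw [Matrix.fromBlocks_mulVec, sumElim_dotProduct_sumElim]
  have hcompA : (Sum.elim tA tB) ∘ Sum.inl = tA := rfl
  have hcompB : (Sum.elim tA tB) ∘ Sum.inr = tB := rfl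
  rw [hcompA, hcompB]
  simp only [Matrix.mulVec_add, e0, Matrix.sub_mulVec, add_dotProduct,
    dotProduct_add, dotProduct_sub, e1, e2]
  ring




lemma assemble (dA dB : ℕ) (τ detA detS qA pA LA vqB vpB vLB : ℝ)
    (hτ : 0 < τ) (hdetA : 0 < detA)
    (hqB : 0 < vqB + τ) (hpB : 0 < vpB + 2) :
    Real.sqrt (τ * (detA * detS)) / (2*Real.pi) ^ ((((dA:ℝ)+(dB:ℝ))+1)/2) *
      Real.exp ((LA + vLB) + Real.sqrt (2*τ)) *
      (2 * besselK (-(((dA:ℝ)+(dB:ℝ))+1)/2)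
        (Real.sqrt (((pA + vpB) + 2) * ((qA + vqB) + τ)))) *
      (((qA + vqB) + τ) / ((pA + vpB) + 2)) ^ ((-(((dA:ℝ)+(dB:ℝ))+1)/2)/2)
    = (Real.sqrt (τ * detS) / (2*Real.pi) ^ (((dB:ℝ)+1)/2) *
        Real.exp (vLB + Real.sqrt (2*τ)) *
        (2 * besselK (-((dB:ℝ)+1)/2) (Real.sqrt ((vpB + 2) * (vqB + τ)))) *
        ((vqB + τ) / (vpB + 2)) ^ ((-((dB:ℝ)+1)/2/2))) *
      (Real.sqrt detA / (2*Real.pi) ^ ((dA:ℝ)/2) *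
        ((vpB + 2)/(vqB + τ)) ^ ((-((dB:ℝ)+1)/2)/2) *
        Real.exp LA *
        ((qA + (vqB + τ)) / (pA + (vpB + 2))) ^ ((-((dB:ℝ)+1)/2 - (dA:ℝ)/2)/2) *
        besselK (-((dB:ℝ)+1)/2 - (dA:ℝ)/2)
          (Real.sqrt ((pA + (vpB + 2)) * (qA + (vqB + τ)))) /
        besselK (-((dB:ℝ)+1)/2) (Real.sqrt ((vpB + 2) * (vqB + τ)))) := by
  have hpi : (0:ℝ) < 2 * Real.pi := by positivity
  have e1 : (qA + vqB) + τ = qA + (vqB + τ) := by ring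
  have e2 : (pA + vpB) + 2 = pA + (vpB + 2) := by ring
  have e3 : -(((dA:ℝ)+(dB:ℝ))+1)/2 = -((dB:ℝ)+1)/2 - (dA:ℝ)/2 := by ring
  have e4 : (((dA:ℝ)+(dB:ℝ))+1)/2 = ((dB:ℝ)+1)/2 + (dA:ℝ)/2 := by ring
  have e5 : τ * (detA * detS) = detA * (τ * detS) := by ring
  rw [e1, e2, e3, e4, e5, Real.sqrt_mul hdetA.le, Real.rpow_add hpi]
  have hK2 : 0 < besselK (-((dB:ℝ)+1)/2) (Real.sqrt ((vpB + 2) * (vqB + τ))) :=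
    besselK_pos _ _ (Real.sqrt_pos.2 (mul_pos hpB hqB))
  have hX : (0:ℝ) < ((vqB + τ) / (vpB + 2)) ^ ((-((dB:ℝ)+1)/2)/2) :=
    Real.rpow_pos_of_pos (by positivity) _
  have hY : ((vpB + 2)/(vqB + τ)) ^ ((-((dB:ℝ)+1)/2)/2)
      = (((vqB + τ) / (vpB + 2)) ^ ((-((dB:ℝ)+1)/2)/2))⁻¹ := by
    rw [show (vpB + 2)/(vqB + τ) = ((vqB + τ)/(vpB + 2))⁻¹ by rw [inv_div],
      Real.inv_rpow (by positivity)]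
  rw [hY]
  have hexp : Real.exp ((LA + vLB) + Real.sqrt (2*τ))
      = Real.exp (vLB + Real.sqrt (2*τ)) * Real.exp LA := by
    rw [← Real.exp_add]; ring_nf
  rw [hexp]
  have hP1 : (0:ℝ) < ((2*Real.pi) ^ (((dB:ℝ)+1)/2)) := by positivity
  have hP2 : (0:ℝ) < ((2*Real.pi) ^ ((dA:ℝ)/2)) := by positivity
  set K2 := besselK (-((dB:ℝ)+1)/2) (Real.sqrt ((vpB + 2) * (vqB + τ))) with hK2d
  set K3 := besselK (-((dB:ℝ)+1)/2 - (dA:ℝ)/2)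
      (Real.sqrt ((pA + (vpB + 2)) * (qA + (vqB + τ)))) with hK3d
  set X := ((vqB + τ) / (vpB + 2)) ^ ((-((dB:ℝ)+1)/2)/2) with hXd
  set Z := ((qA + (vqB + τ)) / (pA + (vpB + 2))) ^ ((-((dB:ℝ)+1)/2 - (dA:ℝ)/2)/2) with hZd
  set P1 := (2*Real.pi) ^ (((dB:ℝ)+1)/2) with hP1d
  set P2 := (2*Real.pi) ^ ((dA:ℝ)/2) with hP2d
  field_simp [hK2.ne', hX.ne', hP1.ne', hP2.ne']
/-- Conditional law of the NIG distribution: for `X ~ NIG(λ, Q, β, τ)` partitioned as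
`(X^A, X^B)`, the conditional density of `X^A` given `X^B = x^B` is the
GH(λ̃, Q^{AA}, β̃, ν̂, â, b̂) density, i.e. the joint NIG density factors as the
`B`-marginal NIG density times this GH density.  Here
`λ̃ = λ^A − (Q^{AA})⁻¹ Q^{AB}(x^B − λ^B)`, `β̃ = β^A + (Q^{AA})⁻¹ Q^{AB} β^B`,
`ν̂ = −(|B|+1)/2`, `â = (β^B)ᵀ(Σ^{BB})⁻¹β^B + 2`,
`b̂ = (x^B − λ^B)ᵀ(Σ^{BB})⁻¹(x^B − λ^B) + τ`, with `Σ = Q⁻¹`. -/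
theorem nig_conditional_law {dA dB : ℕ}
    (lam beta : (Fin dA ⊕ Fin dB) → ℝ)
    (Q : Matrix (Fin dA ⊕ Fin dB) (Fin dA ⊕ Fin dB) ℝ) (hQ : Q.PosDef)
    (τ : ℝ) (hτ : 0 < τ) (xA : Fin dA → ℝ) (xB : Fin dB → ℝ) :
    nigPdf lam Q beta τ (Sum.elim xA xB) =
      nigPdf (fun j => lam (Sum.inr j)) ((Q⁻¹.toBlocks₂₂)⁻¹)
          (fun j => beta (Sum.inr j)) τ xB *
        ghPdf
          ((fun i => lam (Sum.inl i)) -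
            (Q.toBlocks₁₁)⁻¹ *ᵥ (Q.toBlocks₁₂ *ᵥ (xB - fun j => lam (Sum.inr j))))
          Q.toBlocks₁₁
          ((fun i => beta (Sum.inl i)) +
            (Q.toBlocks₁₁)⁻¹ *ᵥ (Q.toBlocks₁₂ *ᵥ (fun j => beta (Sum.inr j))))
          (-((dB : ℝ)+1)/2)
          ((fun j => beta (Sum.inr j)) ⬝ᵥ
            ((Q⁻¹.toBlocks₂₂)⁻¹ *ᵥ (fun j => beta (Sum.inr j))) + 2)
          ((xB - fun j => lam (Sum.inr j)) ⬝ᵥ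
            ((Q⁻¹.toBlocks₂₂)⁻¹ *ᵥ (xB - fun j => lam (Sum.inr j))) + τ)
          xA := by
  classical
  set lA := (fun i => lam (Sum.inl i)) with hlA
  set lB := (fun j => lam (Sum.inr j)) with hlB
  set bA := (fun i => beta (Sum.inl i)) with hbA
  set bB := (fun j => beta (Sum.inr j)) with hbB
  set A := Q.toBlocks₁₁ with hAdef
  set Bm := Q.toBlocks₁₂ with hBdef
  set S := (Q⁻¹.toBlocks₂₂)⁻¹ with hSdef
  have hQt : Qᵀ = Q := by
    have h := hQ.1
    ext i j
    have := congrFun (congrFun h i) j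
    simpa [Matrix.conjTranspose_apply] using this
  have hApd : A.PosDef := posDef_toBlocks₁₁ hQ
  have hAd : IsUnit A.det := hApd.det_pos.ne'.isUnit
  have hAt : Aᵀ = A := by
    ext i j
    have := congrFun (congrFun hQt (Sum.inl i)) (Sum.inl j)
    simpa [hAdef, Matrix.transpose_apply, Matrix.toBlocks₁₁] using this
  have hC : Q.toBlocks₂₁ = Bmᵀ := by
    ext i j
    have := congrFun (congrFun hQt (Sum.inl j)) (Sum.inr i)
    simpa [hBdef, Matrix.transpose_apply, Matrix.toBlocks₂₁, Matrix.toBlocks₁₂] using this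
  have hQb : Q = Matrix.fromBlocks A Bm Bmᵀ Q.toBlocks₂₂ := by
    rw [← hC, hAdef, hBdef]
    exact (Matrix.fromBlocks_toBlocks Q).symm
  have hSch : S = Q.toBlocks₂₂ - Bmᵀ * A⁻¹ * Bm := by
    rw [hSdef, schur_eq hQ, hC]
  have hSpd : S.PosDef := (posDef_toBlocks₂₂ hQ.inv).inv
  have hdet : Q.det = A.det * S.det := by
    haveI := A.invertibleOfIsUnitDet hAd
    calc Q.det = (Matrix.fromBlocks A Bm Bmᵀ Q.toBlocks₂₂).det := by rw [← hQb]
      _ = A.det * (Q.toBlocks₂₂ - Bmᵀ * ⅟A * Bm).det := Matrix.det_fromBlocks₁₁ _ _ _ _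
      _ = A.det * S.det := by rw [Matrix.invOf_eq_nonsing_inv, ← hSch]
  have hsub : Sum.elim xA xB - lam = Sum.elim (xA - lA) (xB - lB) := by
    funext z
    cases z with
    | inl i => simp [hlA]
    | inr j => simp [hlB]
  have hbeta : beta = Sum.elim bA bB := by
    funext z
    cases z with
    | inl i => simp [hbA]
    | inr j => simp [hbB]
  have hmu : xA - (lA - A⁻¹ *ᵥ (Bm *ᵥ (xB - lB)))
      = (xA - lA) + A⁻¹ *ᵥ (Bm *ᵥ (xB - lB)) := by
    funext i
    simp only [Pi.sub_apply, Pi.add_apply]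
    ring
  have hKey : ∀ (sA tA : Fin dA → ℝ) (sB tB : Fin dB → ℝ),
      Sum.elim sA sB ⬝ᵥ (Q *ᵥ Sum.elim tA tB)
        = (sA + A⁻¹ *ᵥ (Bm *ᵥ sB)) ⬝ᵥ (A *ᵥ (tA + A⁻¹ *ᵥ (Bm *ᵥ tB)))
          + sB ⬝ᵥ (S *ᵥ tB) := by
    intro sA tA sB tB
    conv_lhs => rw [hQb]
    rw [key_bilinear A Bm _ hAt hAd, ← hSch]
  have hvqB : 0 ≤ (xB - lB) ⬝ᵥ (S *ᵥ (xB - lB)) := by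
    have := hSpd.posSemidef.dotProduct_mulVec_nonneg (xB - lB)
    simpa using this
  have hvpB : 0 ≤ bB ⬝ᵥ (S *ᵥ bB) := by
    have := hSpd.posSemidef.dotProduct_mulVec_nonneg bB
    simpa using this
  have hqB : 0 < (xB - lB) ⬝ᵥ (S *ᵥ (xB - lB)) + τ := by linarith
  have hpB : 0 < bB ⬝ᵥ (S *ᵥ bB) + 2 := by linarith
  simp only [nigPdf, ghPdf, Fintype.card_sum, Fintype.card_fin, Nat.cast_add]
  rw [hsub, hbeta, hmu, hdet,
    hKey (xA - lA) (xA - lA) (xB - lB) (xB - lB),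
    hKey bA bA bB bB,
    hKey (xA - lA) bA (xB - lB) bB]
  exact assemble dA dB τ A.det S.det _ _ _ _ _ _ hτ hApd.det_pos hqB hpB
end
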